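/- Let α ∈ (0,1), let 0 < β < α, let γ ≥ 0 be an integer, and let ε > 0. Then for every sufficiently large integer r ≥ 2 the following holds: setting n_i = 2·⌊((γ+1)·ω_r(ω_r(2i)))^{1/β}⌋ and m_i = 2·⌊((γ+1)·ω_r(ω_r(2i+1)))^{1/β}⌋, for all sufficiently large i one has V_{γ,r}(2i) ≤ n_i^β and V_{γ,r}(2i+1) > 2(1 − α(γ+2)/(γ+1))·n_i^α·ln n_i + ε, and also V_{γ,r}(2i+1) ≤ m_i^β and V_{γ,r}(2i+2) > 2(1 − α(γ+2)/(γ+1))·m_i^α·ln m_i + ε. -/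

import Mathlib

open Filter FirstOrder

noncomputable section

/-! ### The binomial random graph `G(n,p)` -/

/-- The number of edges of a simple graph. -/
noncomputable def edgeCt {n : ℕ} (G : SimpleGraph (Fin n)) : ℕ := Nat.card G.edgeSet

open scoped Classical in
/-- `prob n p Q` is the probability that the binomial random graph `G(n,p)` (on vertex set
`Fin n`) has property `Q`: the sum over all graphs `G` with `Q G` of
`p^{e(G)} (1-p)^{n(n-1)/2 - e(G)}`. -/
noncomputable def prob (n : ℕ) (p : ℝ) (Q : SimpleGraph (Fin n) → Prop) : ℝ :=
  ∑ G : SimpleGraph (Fin n),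
    if Q G then p ^ edgeCt G * (1 - p) ^ (n * (n - 1) / 2 - edgeCt G) else 0

/-- `expec n p W` is the expectation of a real-valued function `W` of the binomial random
graph `G(n,p)`. -/
noncomputable def expec (n : ℕ) (p : ℝ) (W : SimpleGraph (Fin n) → ℝ) : ℝ :=
  ∑ G : SimpleGraph (Fin n),
    W G * (p ^ edgeCt G * (1 - p) ^ (n * (n - 1) / 2 - edgeCt G))

/-! ### The graphs `W_a^γ` and `W_a^{γ,*}` -/

/-- `ωr r a = (r^a − 1)/(r−1)`, the number of vertices of the perfect `r`-ary tree of
depth `a − 1`. -/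
def ωr (r a : ℕ) : ℕ := (r ^ a - 1) / (r - 1)

/-- The depth of the node with (0-based) breadth-first (heap) index `j` in the infinite
`r`-ary tree: the root has index 0, and the parent of node `j ≥ 1` is node `(j−1)/r`. -/
def heapDepth (r : ℕ) : ℕ → ℕ
  | 0 => 0
  | j + 1 => heapDepth r (j / r) + 1
  decreasing_by exact Nat.lt_succ_of_le (Nat.div_le_self _ _)

/-- The vertex set of `W_a^γ`: the path `F₁` on `a` vertices (`Sum.inl`), together with,
for each of the `(4^a−1)/3` vertices `i` of the perfect 4-ary tree `F₂` (in breadth-first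
order), the vertex `(i,0)` of `F₂` itself and the `γ` inner vertices `(i,1),…,(i,γ)` of the
path `P_{γ+2}` joining `i` to the vertex of `F₁` at the same distance from the root. -/
abbrev WVert (γ a : ℕ) := Fin a ⊕ (Fin (ωr 4 a) × Fin (γ + 1))

/-- Base (directed) adjacency relation generating `W_a^γ`: consecutive `F₁`-vertices;
the last inner path vertex `(i,γ)` is joined to the `F₁`-vertex at depth of `i`;
consecutive vertices along each `P_{γ+2}`; and tree edges of the perfect 4-ary tree
(in heap indexing, `j` is the parent of `i ≥ 1` iff `j = (i−1)/4`). -/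
def Wbase (γ a : ℕ) : WVert γ a → WVert γ a → Prop
  | Sum.inl u, Sum.inl v => (v : ℕ) = (u : ℕ) + 1
  | Sum.inl u, Sum.inr iv => (iv.2 : ℕ) = γ ∧ heapDepth 4 (iv.1 : ℕ) = (u : ℕ)
  | Sum.inr _, Sum.inl _ => False
  | Sum.inr iv, Sum.inr jw =>
      (iv.1 = jw.1 ∧ (jw.2 : ℕ) = (iv.2 : ℕ) + 1) ∨
      ((iv.2 : ℕ) = 0 ∧ (jw.2 : ℕ) = 0 ∧ 1 ≤ (iv.1 : ℕ) ∧ (jw.1 : ℕ) = ((iv.1 : ℕ) - 1) / 4)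

/-- The graph `W_a^γ`. -/
def WG (γ a : ℕ) : SimpleGraph (WVert γ a) := SimpleGraph.fromRel (Wbase γ a)

/-- The vertex set of `W_a^{γ,*}` (with `ω₁ = ωr r a`, `ω₂ = ωr r ω₁`), as five pieces:
the path `F₁` on `a` vertices; the tree `F₂` together with the inner vertices of the
paths `P_{γ+2}` joining `F₂` to `F₁` (pairs `(i,k)`, `k = 0` being the `F₂`-vertex itself);
the `γ` inner vertices of the paths `P_{γ+2}` joining the `i`-th vertex of `F₂` (in
breadth-first order) to the `i`-th vertex of the path `F̃₁`; the path `F̃₁` on `ω₁`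
vertices; and the tree `F̃₂` together with the inner vertices of the paths `P_{γ+2}`
joining `F̃₂` to `F̃₁`. -/
abbrev WSVert (γ r a : ℕ) :=
  Fin a ⊕ ((Fin (ωr r a) × Fin (γ + 1)) ⊕ ((Fin (ωr r a) × Fin γ) ⊕
    (Fin (ωr r a) ⊕ (Fin (ωr r (ωr r a)) × Fin (γ + 1)))))

/-- Base (directed) adjacency relation generating `W_a^{γ,*}`. -/
def WSbase (γ r a : ℕ) : WSVert γ r a → WSVert γ r a → Prop
  | .inl u, .inl v => (v : ℕ) = (u : ℕ) + 1
  | .inl u, .inr (.inl iv) => (iv.2 : ℕ) = γ ∧ heapDepth r (iv.1 : ℕ) = (u : ℕ)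
  | .inr (.inl iv), .inr (.inl jw) =>
      (iv.1 = jw.1 ∧ (jw.2 : ℕ) = (iv.2 : ℕ) + 1) ∨
      ((iv.2 : ℕ) = 0 ∧ (jw.2 : ℕ) = 0 ∧ 1 ≤ (iv.1 : ℕ) ∧ (jw.1 : ℕ) = ((iv.1 : ℕ) - 1) / r)
  | .inr (.inl iv), .inr (.inr (.inl jm)) => (iv.2 : ℕ) = 0 ∧ iv.1 = jm.1 ∧ (jm.2 : ℕ) = 0
  | .inr (.inl iv), .inr (.inr (.inr (.inl d))) => γ = 0 ∧ (iv.2 : ℕ) = 0 ∧ (iv.1 : ℕ) = (d : ℕ)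
  | .inr (.inr (.inl im)), .inr (.inr (.inl jm)) => im.1 = jm.1 ∧ (jm.2 : ℕ) = (im.2 : ℕ) + 1
  | .inr (.inr (.inl im)), .inr (.inr (.inr (.inl d))) =>
      (im.2 : ℕ) + 1 = γ ∧ (im.1 : ℕ) = (d : ℕ)
  | .inr (.inr (.inr (.inl d))), .inr (.inr (.inr (.inl e))) => (e : ℕ) = (d : ℕ) + 1
  | .inr (.inr (.inr (.inl d))), .inr (.inr (.inr (.inr jw))) =>
      (jw.2 : ℕ) = γ ∧ heapDepth r (jw.1 : ℕ) = (d : ℕ)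
  | .inr (.inr (.inr (.inr iv))), .inr (.inr (.inr (.inr jw))) =>
      (iv.1 = jw.1 ∧ (jw.2 : ℕ) = (iv.2 : ℕ) + 1) ∨
      ((iv.2 : ℕ) = 0 ∧ (jw.2 : ℕ) = 0 ∧ 1 ≤ (iv.1 : ℕ) ∧ (jw.1 : ℕ) = ((iv.1 : ℕ) - 1) / r)
  | _, _ => False

/-- The graph `W_a^{γ,*}`. -/
def WSG (γ r a : ℕ) : SimpleGraph (WSVert γ r a) := SimpleGraph.fromRel (WSbase γ r a)

/-- `Vnum γ r a = V_{γ,r}(a) = a + 2(γ+1)ω_r(a) + (γ+1)ω_r(ω_r(a))`,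
the number of vertices of `W_a^{γ,*}`. -/
def Vnum (γ r a : ℕ) : ℕ := a + 2 * (γ + 1) * ωr r a + (γ + 1) * ωr r (ωr r a)

/-- `s` is (the vertex set of) an induced copy of `H` in `G`. -/
def IsInducedCopy {V W : Type} (H : SimpleGraph W) (G : SimpleGraph V) (s : Set V) : Prop :=
  Nonempty (H ≃g G.induce s)

/-! ### The quantities `k_γ` and `f` -/

/-- `kcoef α γ = k_γ = 2(1 − α(γ+2)/(γ+1))`. -/
def kcoef (α : ℝ) (γ : ℕ) : ℝ := 2 * (1 - α * ((γ : ℝ) + 2) / ((γ : ℝ) + 1))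

/-- `ff α x = f(x) = x^α · ln x`. -/
def ff (α x : ℝ) : ℝ := x ^ α * Real.log x

/-! ### The language `L_m` and EMSO satisfaction -/

/-- Relation symbols of the language `L_m`: `m` unary symbols and one binary symbol. -/
def LRel (m : ℕ) : ℕ → Type
  | 1 => Fin m
  | 2 => Unit
  | _ => Empty

/-- The first-order language `L_m`: one binary relation symbol, `m` unary relation symbols
and no function symbols. -/
def Lang (m : ℕ) : Language where
  Functions := fun _ => Empty
  Relations := LRel m

/-- The `L_m`-structure on `Fin n` whose binary relation is adjacency in the graph `G` and
whose `i`-th unary relation is membership in `S i`. -/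
def structOf {n m : ℕ} (G : SimpleGraph (Fin n)) (S : Fin m → Set (Fin n)) :
    (Lang m).Structure (Fin n) where
  funMap := fun f _ => Empty.elim f
  RelMap := fun {k} r v =>
    match k, r, v with
    | 1, i, v => v 0 ∈ S i
    | 2, _, v => G.Adj (v 0) (v 1)
    | 0, r, _ => Empty.elim r
    | (_ + 3), r, _ => Empty.elim r

/-- `G` EMSO-satisfies the `L_m`-sentence `φ`: there are sets `S 0, …, S (m-1)` of vertices
such that the structure on `Fin n` given by adjacency in `G` and membership in the `S i`
satisfies `φ`. -/
def EMSOSat {n m : ℕ} (G : SimpleGraph (Fin n)) (φ : (Lang m).Sentence) : Prop :=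
  ∃ S : Fin m → Set (Fin n),
    @FirstOrder.Language.Sentence.Realize (Lang m) (Fin n) (structOf G S) φ

namespace Aux

theorem omega_zero (r : ℕ) : ωr r 0 = 0 := by simp [ωr]

theorem omega_key {r : ℕ} (hr : 2 ≤ r) (a : ℕ) : (r - 1) * ωr r a + 1 = r ^ a := by
  obtain ⟨q, hq⟩ := Nat.sub_dvd_pow_sub_pow r 1 a
  simp only [one_pow] at hq
  have h1 : 1 ≤ r ^ a := Nat.one_le_pow _ _ (by omega)
  have hpa : r ^ a = (r - 1) * q + 1 := by omega
  have : ωr r a = q := by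
    unfold ωr
    rw [hq, Nat.mul_div_cancel_left _ (by omega : 0 < r - 1)]
  rw [this]; omega

theorem omega_succ {r : ℕ} (hr : 2 ≤ r) (a : ℕ) : ωr r (a + 1) = r * ωr r a + 1 := by
  have h1 := omega_key hr a
  have h2 := omega_key hr (a + 1)
  rw [pow_succ] at h2
  set u := ωr r a with hu
  set v := ωr r (a + 1) with hv
  have h3 : ((r-1)*u + 1) * r = r^a * r := by rw [h1]
  have e : ((r-1)*u+1)*r = (r-1)*(r*u) + r := by ring
  rw [e] at h3
  have e2 : (r-1)*(r*u+1) = (r-1)*(r*u) + (r-1) := by ring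
  have h4 : (r-1)*(r*u+1) = (r-1)*v := by omega
  exact (Nat.eq_of_mul_eq_mul_left (by omega) h4).symm

theorem omega_arg_succ {r : ℕ} (hr : 2 ≤ r) (a : ℕ) : ωr r (a + 1) = ωr r a + r ^ a := by
  have h1 := omega_key hr a
  have h2 := omega_succ hr a
  have hsm : (r - 1) * ωr r a = r * ωr r a - ωr r a := Nat.sub_one_mul r (ωr r a)
  have hle : ωr r a ≤ r * ωr r a := Nat.le_mul_of_pos_left _ (by omega)
  omega

theorem omega_lt_pow {r : ℕ} (hr : 2 ≤ r) (a : ℕ) : ωr r a < r ^ a := by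
  have := omega_key hr a
  have : ωr r a ≤ (r - 1) * ωr r a := Nat.le_mul_of_pos_left _ (by omega)
  omega

theorem pow_le_omega {r : ℕ} (hr : 2 ≤ r) (a : ℕ) : r ^ a ≤ ωr r (a + 1) := by
  induction a with
  | zero => simp [omega_succ hr, omega_zero]
  | succ a ih =>
    rw [omega_succ hr (a+1), pow_succ, mul_comm (r ^ a) r]
    have := Nat.mul_le_mul_left r ih
    omega

theorem le_omega {r : ℕ} (hr : 2 ≤ r) (a : ℕ) : a ≤ ωr r a := by
  induction a with
  | zero => simp
  | succ a ih =>
    rw [omega_succ hr a]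
    have : ωr r a ≤ r * ωr r a := Nat.le_mul_of_pos_left _ (by omega)
    omega

theorem omega_le_two_pow {r : ℕ} (hr : 2 ≤ r) (a : ℕ) : ωr r (a + 1) ≤ 2 * r ^ a - 1 := by
  induction a with
  | zero => simp [omega_succ hr, omega_zero]
  | succ a ih =>
    rw [omega_succ hr (a+1), pow_succ]
    have h1 := Nat.mul_le_mul_left r ih
    have h2 : r * (2 * r ^ a - 1) = r * (2 * r ^ a) - r * 1 := Nat.mul_sub r _ _
    have h3 : r * (2 * r ^ a) = 2 * (r ^ a * r) := by ring
    have h4 : r ≤ r ^ a * r := Nat.le_mul_of_pos_left _ (Nat.pow_pos (n := a) (by omega))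
    omega

theorem two_pow_le_omega {r : ℕ} (hr : 2 ≤ r) {b : ℕ} (hb : 1 ≤ b) : 2 ^ (b - 1) ≤ ωr r b := by
  obtain ⟨c, rfl⟩ : ∃ c, b = c + 1 := ⟨b - 1, by omega⟩
  calc 2 ^ (c + 1 - 1) ≤ r ^ c := Nat.pow_le_pow_left hr _
    _ ≤ ωr r (c + 1) := pow_le_omega hr c

theorem two_mul_le_two_pow {a : ℕ} (ha : 1 ≤ a) : 2 * a ≤ 2 ^ a := by
  induction a with
  | zero => omega
  | succ a ih =>
    rcases Nat.eq_or_lt_of_le ha with h | h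
    · simp [← h]
    · have h2 : 2 ≤ 2 ^ a := by
        calc 2 = 2^1 := rfl
        _ ≤ 2 ^ a := Nat.pow_le_pow_right (by omega) (by omega)
      have := ih (by omega)
      rw [pow_succ]; omega

theorem lin_le_exp (C c : ℝ) (hc : 0 < c) : ∀ᶠ n : ℕ in atTop, C * n ≤ c * 2 ^ (n - 1) := by
  obtain ⟨M, hM⟩ : ∃ M : ℕ, 2 * C / c < 2 ^ M := pow_unbounded_of_one_lt _ one_lt_two
  have hM' : 2 * C < c * 2 ^ M := by
    rwa [div_lt_iff₀ hc, mul_comm (2 ^ M : ℝ) c] at hM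
  filter_upwards [eventually_ge_atTop (2 * M + 2)] with n hn
  have hk : n - 1 = M + (n - 1 - M) := by omega
  set k := n - 1 - M with hkdef
  have hnk : n ≤ 2 * k := by omega
  have hk2 : (k : ℝ) < 2 ^ k := by exact_mod_cast Nat.lt_two_pow_self (n := k)
  have hn2 : (n : ℝ) ≤ 2 * 2 ^ k := by
    have : (n : ℝ) ≤ 2 * k := by exact_mod_cast hnk
    nlinarith
  have hpow : (2 : ℝ) ^ (n - 1) = 2 ^ M * 2 ^ k := by rw [hk, pow_add]
  rw [hpow]
  have h2k : (0:ℝ) < 2 ^ k := by positivity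
  have h2M : (0:ℝ) < 2 ^ M := by positivity
  nlinarith [mul_le_mul_of_nonneg_right hM'.le (Nat.cast_nonneg n : (0:ℝ) ≤ n),
    mul_le_mul_of_nonneg_left hn2 (mul_nonneg hc.le h2M.le)]

theorem const_le_two_rpow (C : ℝ) : ∀ᶠ a : ℕ in atTop, C ≤ (2:ℝ) ^ ((a:ℝ) - 1) := by
  have hlog : (0:ℝ) < Real.log 2 := Real.log_pos (by norm_num)
  have ht : Tendsto (fun a : ℕ => Real.log 2 * ((a:ℝ) - 1) + 1) atTop atTop := by
    apply tendsto_atTop_add_const_right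
    apply Tendsto.const_mul_atTop hlog
    apply tendsto_atTop_add_const_right
    exact tendsto_natCast_atTop_atTop
  filter_upwards [ht.eventually_ge_atTop C] with a ha
  calc C ≤ Real.log 2 * ((a:ℝ) - 1) + 1 := ha
    _ ≤ Real.exp (Real.log 2 * ((a:ℝ) - 1)) := Real.add_one_le_exp _
    _ = (2:ℝ) ^ ((a:ℝ) - 1) := (Real.rpow_def_of_pos (by norm_num) _).symm

set_option maxHeartbeats 1000000 in
theorem main (α β : ℝ) (hα0 : 0 < α) (hα1 : α < 1) (hβ0 : 0 < β) (hβα : β < α)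
    (γ : ℕ) (ε : ℝ) (hε : 0 < ε) {r : ℕ} (hr2 : 2 ≤ r) (hr8 : 8 / β ≤ (r:ℝ)) :
    ∀ᶠ a : ℕ in atTop, ∀ N : ℕ,
      N = 2 * ⌊((((γ : ℝ) + 1) * (ωr r (ωr r a) : ℝ)) ^ ((1 : ℝ) / β))⌋₊ →
      (Vnum γ r a : ℝ) ≤ (N:ℝ) ^ β ∧
      (Vnum γ r (a+1) : ℝ) >
        2 * (1 - α * ((γ:ℝ)+2) / ((γ:ℝ)+1)) * (N:ℝ) ^ α * Real.log N + ε := by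
  have hβ1 : β < 1 := hβα.trans hα1
  -- constants
  set c : ℝ := (4/3:ℝ) ^ β - 1 with hcdef
  have hc1 : (1:ℝ) < (4/3:ℝ) ^ β := by
    have := Real.rpow_lt_rpow_of_exponent_lt (show (1:ℝ) < 4/3 by norm_num) hβ0
    rwa [Real.rpow_zero] at this
  have hc : 0 < c := by simp only [hcdef]; linarith
  set D : ℝ := ((γ:ℝ) + 1) ^ ((2:ℝ)/β) with hDdef
  have hγ1 : (1:ℝ) ≤ (γ:ℝ) + 1 := le_add_of_nonneg_left (Nat.cast_nonneg γ)
  have hD0 : 0 < D := Real.rpow_pos_of_pos (by linarith) _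
  -- tendsto facts
  have hω1T : Tendsto (fun a : ℕ => ωr r a) atTop atTop :=
    tendsto_atTop_mono (le_omega hr2) tendsto_id
  have hω2T : Tendsto (fun a : ℕ => ((ωr r (ωr r a) : ℕ) : ℝ)) atTop atTop := by
    apply tendsto_atTop_mono (fun a => ?_) tendsto_natCast_atTop_atTop
    exact_mod_cast le_trans (le_omega hr2 a) (le_omega hr2 _)
  filter_upwards [eventually_ge_atTop 1, hω2T.eventually_ge_atTop (max 3 ε),
    hω1T.eventually (lin_le_exp (2*(γ:ℝ)+3) c hc), const_le_two_rpow (10 * D)]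
    with a ha1 ha2 ha3 ha5 N hN
  set ω1 := ωr r a with hω1def
  set ω2 := ωr r ω1 with hω2def
  have hω1a : a ≤ ω1 := le_omega hr2 a
  have hω11 : 1 ≤ ω1 := le_trans ha1 hω1a
  have hω2_3 : (3:ℝ) ≤ (ω2:ℝ) := le_trans (le_max_left _ _) ha2
  have hω2_ε : ε ≤ (ω2:ℝ) := le_trans (le_max_right _ _) ha2
  set X : ℝ := ((γ:ℝ) + 1) * (ω2:ℝ) with hXdef
  have hω2X : (ω2:ℝ) ≤ X := le_mul_of_one_le_left (by linarith) hγ1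
  have hX3 : (3:ℝ) ≤ X := le_trans hω2_3 hω2X
  have hX0 : (0:ℝ) < X := by linarith
  have hXε : ε ≤ X := le_trans hω2_ε hω2X
  set y : ℝ := X ^ ((1:ℝ)/β) with hydef
  have h1β : (1:ℝ) ≤ 1/β := by rw [le_div_iff₀ hβ0]; linarith
  have hy3 : (3:ℝ) ≤ y := by
    calc (3:ℝ) = 3 ^ (1:ℝ) := (Real.rpow_one 3).symm
      _ ≤ (3:ℝ) ^ ((1:ℝ)/β) := Real.rpow_le_rpow_of_exponent_le (by norm_num) h1β
      _ ≤ X ^ ((1:ℝ)/β) := Real.rpow_le_rpow (by norm_num) hX3 (div_nonneg zero_le_one hβ0.le)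
  have hy0 : (0:ℝ) < y := by linarith
  have hNcast : (N:ℝ) = 2 * (⌊y⌋₊ : ℝ) := by rw [hN]; push_cast; ring
  have hNlb : (4/3) * y ≤ (N:ℝ) := by
    have := Nat.sub_one_lt_floor y
    rw [hNcast]; linarith
  have hNub : (N:ℝ) ≤ 2 * y := by
    have := Nat.floor_le hy0.le
    rw [hNcast]; linarith
  have hN1 : (1:ℝ) ≤ (N:ℝ) := by linarith
  -- Part 1
  have hVcast : (Vnum γ r a : ℝ) = (a:ℝ) + 2*((γ:ℝ)+1)*(ω1:ℝ) + ((γ:ℝ)+1)*(ω2:ℝ) := by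
    simp only [Vnum, ← hω1def, ← hω2def]; push_cast; ring
  have h2pow : ((2:ℝ)) ^ (ω1 - 1 : ℕ) ≤ (ω2:ℝ) := by
    exact_mod_cast Nat.cast_le.mpr (two_pow_le_omega hr2 hω11)
  have hsmall : (a:ℝ) + 2*((γ:ℝ)+1)*(ω1:ℝ) ≤ c * X := by
    have haω : (a:ℝ) ≤ (ω1:ℝ) := by exact_mod_cast hω1a
    have h1 : (a:ℝ) + 2*((γ:ℝ)+1)*(ω1:ℝ) ≤ (2*(γ:ℝ)+3) * (ω1:ℝ) := by
      have : (0:ℝ) ≤ (ω1:ℝ) := by positivity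
      nlinarith
    have h2 : (2*(γ:ℝ)+3) * (ω1:ℝ) ≤ c * 2 ^ (ω1 - 1 : ℕ) := ha3
    have h3 : c * ((2:ℝ)) ^ (ω1 - 1 : ℕ) ≤ c * X := by
      apply mul_le_mul_of_nonneg_left _ hc.le
      exact le_trans h2pow hω2X
    linarith
  have hP1 : (Vnum γ r a : ℝ) ≤ (N:ℝ) ^ β := by
    have hyβ : y ^ β = X := by
      rw [hydef, ← Real.rpow_mul hX0.le, one_div_mul_cancel (ne_of_gt hβ0), Real.rpow_one]
    have h1 : ((4/3:ℝ) * y) ^ β ≤ (N:ℝ) ^ β :=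
      Real.rpow_le_rpow (by positivity) hNlb hβ0.le
    have h2 : ((4/3:ℝ) * y) ^ β = (4/3:ℝ)^β * X := by
      rw [Real.mul_rpow (by norm_num) hy0.le, hyβ]
    have h3 : (Vnum γ r a : ℝ) ≤ (4/3:ℝ)^β * X := by
      rw [hVcast]
      have : ((γ:ℝ)+1)*(ω2:ℝ) = X := rfl
      rw [this]
      have hsmall2 : (a:ℝ) + 2*((γ:ℝ)+1)*(ω1:ℝ) ≤ ((4/3:ℝ)^β - 1) * X := hsmall
      nlinarith [hsmall2]
    linarith [h2 ▸ h1]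
  refine ⟨hP1, ?_⟩
  -- Part 2
  set k : ℝ := 2 * (1 - α * ((γ:ℝ)+2) / ((γ:ℝ)+1)) with hkdef
  have hk2 : k ≤ 2 := by
    have : (0:ℝ) ≤ α * ((γ:ℝ)+2) / ((γ:ℝ)+1) := by positivity
    rw [hkdef]; linarith
  have hlnN : 0 ≤ Real.log N := Real.log_nonneg hN1
  have hlnN2 : Real.log N ≤ (N:ℝ) := by
    have := Real.log_le_sub_one_of_pos (show (0:ℝ) < N by linarith)
    linarith
  have hNα : (N:ℝ) ^ α ≤ (N:ℝ) := by
    calc (N:ℝ) ^ α ≤ (N:ℝ) ^ (1:ℝ) := Real.rpow_le_rpow_of_exponent_le hN1 hα1.le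
      _ = (N:ℝ) := Real.rpow_one _
  have hNα0 : 0 ≤ (N:ℝ) ^ α := Real.rpow_nonneg (Nat.cast_nonneg N) α
  have hRHS : k * (N:ℝ) ^ α * Real.log N + ε ≤ 9 * X ^ ((2:ℝ)/β) := by
    have hprod : (N:ℝ)^α * Real.log N ≤ (N:ℝ) * (N:ℝ) :=
      mul_le_mul hNα hlnN2 hlnN (Nat.cast_nonneg N)
    have hprod0 : 0 ≤ (N:ℝ)^α * Real.log N := mul_nonneg hNα0 hlnN
    have step1 : k * (N:ℝ)^α * Real.log N ≤ 2 * ((N:ℝ)*(N:ℝ)) := by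
      calc k * (N:ℝ)^α * Real.log N = k * ((N:ℝ)^α * Real.log N) := by ring
        _ ≤ 2 * ((N:ℝ)^α * Real.log N) := mul_le_mul_of_nonneg_right hk2 hprod0
        _ ≤ 2 * ((N:ℝ)*(N:ℝ)) := by linarith
    have step2 : (N:ℝ)*(N:ℝ) ≤ 4 * (y*y) := by nlinarith
    have step3 : y * y = X ^ ((2:ℝ)/β) := by
      have he : (1:ℝ)/β + 1/β = 2/β := by ring
      rw [hydef, ← Real.rpow_add hX0, he]
    have hX1 : (1:ℝ) ≤ X := by linarith
    have step4 : X ≤ X ^ ((2:ℝ)/β) := by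
      have h2β : (1:ℝ) ≤ 2/β := by rw [le_div_iff₀ hβ0]; linarith
      calc X = X ^ (1:ℝ) := (Real.rpow_one X).symm
        _ ≤ X ^ ((2:ℝ)/β) := Real.rpow_le_rpow_of_exponent_le hX1 h2β
    calc k * (N:ℝ)^α * Real.log N + ε ≤ 2 * ((N:ℝ)*(N:ℝ)) + ε := by linarith
      _ ≤ 8 * (y*y) + X := by linarith
      _ = 8 * X ^ ((2:ℝ)/β) + X := by rw [step3]
      _ ≤ 9 * X ^ ((2:ℝ)/β) := by linarith
  -- lower bound for Vnum γ r (a+1)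
  set Z : ℕ := ωr r (ωr r (a+1)) with hZdef
  have hVZ : (Z:ℝ) ≤ (Vnum γ r (a+1) : ℝ) := by
    have h1 : Z ≤ (γ+1) * Z := Nat.le_mul_of_pos_left _ (by omega)
    have h2 : (γ+1) * Z ≤ Vnum γ r (a+1) := by
      simp only [Vnum, ← hZdef]
      exact Nat.le_add_left _ _
    exact_mod_cast le_trans h1 h2
  set E : ℕ := ω1 + r^a - 1 with hEdef
  have hra1 : 1 ≤ r ^ a := Nat.one_le_pow _ _ (by omega)
  have hE1 : E + 1 = ω1 + r^a := by omega
  have hZE : (r:ℝ) ^ (E:ℕ) ≤ (Z:ℝ) := by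
    have harg : ωr r (a+1) = ω1 + r^a := omega_arg_succ hr2 a
    have := pow_le_omega hr2 E
    rw [hE1, ← harg] at this
    exact_mod_cast this
  -- exponents
  have hR2 : (2:ℝ) ≤ (r:ℝ) := by exact_mod_cast hr2
  have hR0 : (0:ℝ) < (r:ℝ) := by linarith
  set s : ℝ := (ω1:ℝ) * ((2:ℝ)/β) with hsdef
  have hEcast : ((E:ℕ):ℝ) = (ω1:ℝ) + (r:ℝ)^(a:ℕ) - 1 := by
    rw [hEdef]
    have : ((ω1 + r^a - 1 : ℕ):ℝ) = ((ω1 + r^a : ℕ):ℝ) - 1 := by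
      rw [Nat.cast_sub (by omega)]; norm_num
    rw [this]; push_cast; ring
  set t : ℝ := ((E:ℕ):ℝ) - s with htdef
  have hs_ub : s ≤ (r:ℝ)^(a:ℕ)/2 := by
    obtain ⟨a', rfl⟩ : ∃ a', a = a' + 1 := ⟨a - 1, by omega⟩
    have hω1ub : (ω1:ℝ) ≤ 2 * (r:ℝ)^(a':ℕ) := by
      have h := omega_le_two_pow hr2 a'
      have h2 : (ω1:ℝ) ≤ ((2 * r^a' - 1 : ℕ):ℝ) := by exact_mod_cast h
      have h3 : ((2 * r^a' - 1 : ℕ):ℝ) ≤ 2 * (r:ℝ)^(a':ℕ) := by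
        rw [Nat.cast_sub (by have : 0 < r ^ a' := Nat.pow_pos (n := a') (by omega); omega)]
        push_cast; linarith [pow_pos hR0 a']
      linarith
    have hpow : (r:ℝ)^(a'+1:ℕ) = (r:ℝ)^(a':ℕ) * (r:ℝ) := pow_succ (r:ℝ) a'
    have hβpos : (0:ℝ) < 2/β := div_pos (by norm_num) hβ0
    have h4 : s ≤ 2 * (r:ℝ)^(a':ℕ) * (2/β) := by
      rw [hsdef]; exact mul_le_mul_of_nonneg_right hω1ub hβpos.le
    have h5 : 2 * (r:ℝ)^(a':ℕ) * (2/β) = (4/β) * (r:ℝ)^(a':ℕ) := by ring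
    have h6 : (4/β) * (r:ℝ)^(a':ℕ) ≤ ((r:ℝ)/2) * (r:ℝ)^(a':ℕ) := by
      apply mul_le_mul_of_nonneg_right _ (pow_pos hR0 a').le
      have h8 : (8:ℝ) ≤ (r:ℝ) * β := (div_le_iff₀ hβ0).mp hr8
      rw [div_le_div_iff₀ hβ0 (by norm_num : (0:ℝ) < 2)]
      linarith
    rw [hpow]; linarith
  have hpa2 : 2*(a:ℝ) ≤ (r:ℝ)^(a:ℕ) := by
    have h1 : 2*a ≤ 2^a := two_mul_le_two_pow ha1
    have h2 : (2:ℕ)^a ≤ r^a := Nat.pow_le_pow_left hr2 a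
    exact_mod_cast le_trans h1 h2
  have ht_lb : (a:ℝ) - 1 ≤ t := by
    have hω1R : (1:ℝ) ≤ (ω1:ℝ) := by exact_mod_cast hω11
    rw [htdef, hEcast]; linarith
  have ha1R : (1:ℝ) ≤ (a:ℝ) := by exact_mod_cast ha1
  have ht0 : 0 ≤ t := by linarith
  have hrt : 10 * D ≤ (r:ℝ) ^ t := by
    calc 10 * D ≤ (2:ℝ) ^ ((a:ℝ) - 1) := ha5
      _ ≤ (2:ℝ) ^ t := Real.rpow_le_rpow_of_exponent_le one_le_two ht_lb
      _ ≤ (r:ℝ) ^ t := Real.rpow_le_rpow (by norm_num) hR2 ht0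
  have hXs : X ^ ((2:ℝ)/β) ≤ D * (r:ℝ) ^ s := by
    have hω2ub : (ω2:ℝ) ≤ (r:ℝ)^(ω1:ℕ) := by
      exact_mod_cast (omega_lt_pow hr2 ω1).le
    have hX_ub : X ≤ ((γ:ℝ)+1) * (r:ℝ)^(ω1:ℕ) := by
      rw [hXdef]; exact mul_le_mul_of_nonneg_left hω2ub (by linarith)
    have h1 : X ^ ((2:ℝ)/β) ≤ (((γ:ℝ)+1) * (r:ℝ)^(ω1:ℕ)) ^ ((2:ℝ)/β) :=
      Real.rpow_le_rpow hX0.le hX_ub (div_nonneg (by norm_num) hβ0.le)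
    have h2 : (((γ:ℝ)+1) * (r:ℝ)^(ω1:ℕ)) ^ ((2:ℝ)/β) = D * (r:ℝ) ^ s := by
      rw [Real.mul_rpow (by linarith) (by positivity), hDdef]
      congr 1
      rw [← Real.rpow_natCast (r:ℝ) ω1, ← Real.rpow_mul hR0.le, hsdef]
    rw [← h2]; exact h1
  have hRE : 9 * X ^ ((2:ℝ)/β) < (r:ℝ) ^ (E:ℕ) := by
    have hRs0 : (0:ℝ) < (r:ℝ) ^ s := Real.rpow_pos_of_pos hR0 _
    have hts : t + s = ((E:ℕ):ℝ) := by rw [htdef]; ring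
    have h1 : (r:ℝ) ^ (E:ℕ) = (r:ℝ) ^ t * (r:ℝ) ^ s := by
      rw [← Real.rpow_natCast (r:ℝ) E, ← hts, Real.rpow_add hR0]
    have h2 : 10 * D * (r:ℝ) ^ s ≤ (r:ℝ) ^ t * (r:ℝ) ^ s :=
      mul_le_mul_of_nonneg_right hrt hRs0.le
    have h3 : 9 * X ^ ((2:ℝ)/β) ≤ 9 * (D * (r:ℝ) ^ s) := by
      apply mul_le_mul_of_nonneg_left hXs (by norm_num)
    have hDRs : (0:ℝ) < D * (r:ℝ) ^ s := mul_pos hD0 hRs0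
    rw [h1]; linarith
  calc 2 * (1 - α * ((γ:ℝ)+2) / ((γ:ℝ)+1)) * (N:ℝ) ^ α * Real.log N + ε
      = k * (N:ℝ) ^ α * Real.log N + ε := by rw [hkdef]
    _ ≤ 9 * X ^ ((2:ℝ)/β) := hRHS
    _ < (r:ℝ) ^ (E:ℕ) := hRE
    _ ≤ (Z:ℝ) := hZE
    _ ≤ (Vnum γ r (a+1) : ℝ) := hVZ

end Aux

/-- Let α ∈ (0,1), 0 < β < α, γ ≥ 0 and ε > 0. Then for every sufficiently
large r ≥ 2: setting n_i = 2⌊((γ+1)·ω_r(ω_r(2i)))^{1/β}⌋ and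
m_i = 2⌊((γ+1)·ω_r(ω_r(2i+1)))^{1/β}⌋, for all sufficiently large i one has
V_{γ,r}(2i) ≤ n_i^β and V_{γ,r}(2i+1) > 2(1 − α(γ+2)/(γ+1))·n_i^α·ln n_i + ε, and also
V_{γ,r}(2i+1) ≤ m_i^β and V_{γ,r}(2i+2) > 2(1 − α(γ+2)/(γ+1))·m_i^α·ln m_i + ε. -/
theorem stmt19 (α β : ℝ) (hα0 : 0 < α) (hα1 : α < 1) (hβ0 : 0 < β) (hβα : β < α)
    (γ : ℕ) (ε : ℝ) (hε : 0 < ε) :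
    ∃ r₀ : ℕ, ∀ r : ℕ, r₀ ≤ r → 2 ≤ r →
      ∀ n m : ℕ → ℕ,
        (∀ i, n i = 2 * ⌊((((γ : ℝ) + 1) * (ωr r (ωr r (2 * i)) : ℝ)) ^ ((1 : ℝ) / β))⌋₊) →
        (∀ i, m i = 2 * ⌊((((γ : ℝ) + 1) * (ωr r (ωr r (2 * i + 1)) : ℝ)) ^ ((1 : ℝ) / β))⌋₊) →
        ∀ᶠ i : ℕ in atTop,
          (Vnum γ r (2 * i) : ℝ) ≤ (n i : ℝ) ^ β ∧
          (Vnum γ r (2 * i + 1) : ℝ) >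
            2 * (1 - α * ((γ : ℝ) + 2) / ((γ : ℝ) + 1)) * (n i : ℝ) ^ α * Real.log (n i) + ε ∧
          (Vnum γ r (2 * i + 1) : ℝ) ≤ (m i : ℝ) ^ β ∧
          (Vnum γ r (2 * i + 2) : ℝ) >
            2 * (1 - α * ((γ : ℝ) + 2) / ((γ : ℝ) + 1)) * (m i : ℝ) ^ α * Real.log (m i) + ε := by
  have hβ1 : β < 1 := hβα.trans hα1
  refine ⟨max 2 ⌈8 / β⌉₊, fun r hr hr2 n m hn hm => ?_⟩
  have hr8 : 8 / β ≤ (r:ℝ) := by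
    have h1 : ((⌈8/β⌉₊ : ℕ) : ℝ) ≤ (r:ℝ) :=
      Nat.cast_le.mpr (le_trans (le_max_right _ _) hr)
    exact le_trans (Nat.le_ceil _) h1
  have H := Aux.main α β hα0 hα1 hβ0 hβα γ ε hε hr2 hr8
  rw [Filter.eventually_atTop] at H ⊢
  obtain ⟨A, hA⟩ := H
  refine ⟨A, fun i hi => ?_⟩
  have h1 := hA (2*i) (by omega) (n i) (hn i)
  have h2 := hA (2*i+1) (by omega) (m i) (hm i)
  have e : 2*i+1+1 = 2*i+2 := by omega
  rw [e] at h2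
  exact ⟨h1.1, h1.2, h2.1, h2.2⟩
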